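/- Let 𝔛 = (X, {R_i}_{i=0}^d) be a symmetric association scheme of class d with pairwise distinct eigenvalues θ₀,…,θ_d of A₁. Then 𝔛 is a P-polynomial association scheme with respect to A₁ if and only if there exists l ∈ {0,1,…,d} such that for each i ∈ {1,…,d}, ∏_{j=1, j≠i}^d (θ₀ − θ_j)/(θ_i − θ_j) = − Q_i(l). Moreover, if such an l exists, then A_l is the last (d-th) adjacency matrix in the P-polynomial ordering. -/

import Mathlib

open Matrix BigOperators

/-- A symmetric association scheme of class `d` on a finite set `X`, bundled with
its adjacency matrices `A i`, primitive idempotents `E i`, and first and second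
eigenmatrices `P`, `Q` (with `P i j = P_i(j)`, `Q i j = Q_i(j)`). -/
structure AssocScheme (X : Type*) [Fintype X] [DecidableEq X] (d : ℕ) where
  A : Fin (d + 1) → Matrix X X ℝ
  E : Fin (d + 1) → Matrix X X ℝ
  P : Fin (d + 1) → Fin (d + 1) → ℝ
  Q : Fin (d + 1) → Fin (d + 1) → ℝ
  A_entries : ∀ i x y, A i x y = 0 ∨ A i x y = 1
  A_zero : A 0 = 1
  A_ne : ∀ i, A i ≠ 0
  A_sum : ∑ i, A i = Matrix.of fun _ _ => (1 : ℝ)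
  A_symm : ∀ i, (A i)ᵀ = A i
  A_mul : ∀ i j, ∃ p : Fin (d + 1) → ℝ, A i * A j = ∑ k, p k • A k
  E_zero : E 0 = ((Fintype.card X : ℝ))⁻¹ • Matrix.of fun _ _ => (1 : ℝ)
  E_sum : ∑ i, E i = 1
  E_mul : ∀ i j, E i * E j = if i = j then E i else 0
  E_symm : ∀ i, (E i)ᵀ = E i
  A_eq : ∀ i, A i = ∑ j, P i j • E j
  E_eq : ∀ i, E i = ((Fintype.card X : ℝ))⁻¹ • ∑ j, Q i j • A j

namespace AssocScheme

variable {V : Type*} [Fintype V] [DecidableEq V] {d : ℕ} (S : AssocScheme V d)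

/-- The eigenvalues `θ_j = P_1(j)` of the first adjacency matrix. -/
def theta (j : Fin (d + 1)) : ℝ := S.P 1 j

/-- `A j` appears in `M` if `M ∘ A j = α • A j` for some nonzero `α`. -/
def Appears (M : Matrix V V ℝ) (j : Fin (d + 1)) : Prop :=
  ∃ α : ℝ, α ≠ 0 ∧ Matrix.hadamard M (S.A j) = α • S.A j

/-- `N*_h`: indices `j` such that `A j` appears in `A₁^h` but in no lower power. -/
def Nstar (h : ℕ) : Set (Fin (d + 1)) :=
  {j | S.Appears (S.A 1 ^ h) j ∧ ∀ l < h, ¬ S.Appears (S.A 1 ^ l) j}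

/-- `S` is a P-polynomial scheme with respect to `A 1`: there is an ordering
`A 0, A 1, A (ξ 2), …, A (ξ d)` and polynomials `v i` of degree `i` with
`v i (A 1) = A (ξ i)`. -/
def IsPPolyWrtA1 : Prop :=
  ∃ ξ : Equiv.Perm (Fin (d + 1)), ξ 0 = 0 ∧ ξ 1 = 1 ∧
    ∃ v : Fin (d + 1) → Polynomial ℝ,
      ∀ i, (v i).natDegree = (i : ℕ) ∧ Polynomial.aeval (S.A 1) (v i) = S.A (ξ i)

end AssocScheme

namespace Thm11

open Polynomial Finset AssocScheme

variable {V : Type*} [Fintype V] [DecidableEq V] {d : ℕ} (S : AssocScheme V d)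

lemma A_nonneg (i : Fin (d+1)) (x y : V) : 0 ≤ S.A i x y := by
  rcases S.A_entries i x y with h | h <;> rw [h] <;> norm_num

lemma sum_entries (x y : V) : ∑ i, S.A i x y = 1 := by
  have h := congrFun (congrFun S.A_sum x) y
  rw [Matrix.sum_apply] at h
  simpa using h

lemma pt_spec (m : Fin (d+1)) :
    ∃ x y, S.A m x y = 1 ∧ ∀ j, j ≠ m → S.A j x y = 0 := by
  have hne := S.A_ne m
  have : ∃ x y, S.A m x y ≠ 0 := by
    by_contra h
    push_neg at h
    exact hne (by ext x y; simpa using h x y)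
  obtain ⟨x, y, hxy⟩ := this
  have h1 : S.A m x y = 1 := by
    rcases S.A_entries m x y with h | h
    · exact absurd h hxy
    · exact h
  refine ⟨x, y, h1, ?_⟩
  have hsum := sum_entries S x y
  rw [← Finset.add_sum_erase _ _ (Finset.mem_univ m), h1] at hsum
  have hz : ∑ j ∈ Finset.univ.erase m, S.A j x y = 0 := by linarith
  intro j hj
  have := (Finset.sum_eq_zero_iff_of_nonneg (fun k _ => A_nonneg S k x y)).mp hz
  exact this j (Finset.mem_erase.mpr ⟨hj, Finset.mem_univ j⟩)

variable {xp yp : Fin (d+1) → V}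
  (hpt1 : ∀ m, S.A m (xp m) (yp m) = 1)
  (hpt0 : ∀ m j, j ≠ m → S.A j (xp m) (yp m) = 0)

include hpt1 hpt0 in
lemma eval_sum (c : Fin (d+1) → ℝ) (m : Fin (d+1)) :
    (∑ j, c j • S.A j) (xp m) (yp m) = c m := by
  rw [Matrix.sum_apply]
  rw [Finset.sum_eq_single m]
  · rw [Matrix.smul_apply, hpt1 m, smul_eq_mul, mul_one]
  · intro j _ hj
    rw [Matrix.smul_apply, hpt0 m j hj, smul_eq_mul, mul_zero]
  · intro h; exact absurd (Finset.mem_univ m) h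

include S in
lemma card_pos : 0 < Fintype.card V := by
  rcases isEmpty_or_nonempty V with he | hn
  · exact absurd (by ext x y; exact he.elim x) (S.A_ne 0)
  · exact Fintype.card_pos

include S in
lemma ninv_ne : ((Fintype.card V : ℝ))⁻¹ ≠ 0 := by
  have := card_pos S
  positivity

include hpt1 hpt0 in
lemma Q_zero (m : Fin (d+1)) : S.Q 0 m = 1 := by
  have h1 := congrFun (congrFun S.E_zero (xp m)) (yp m)
  have h2 := congrFun (congrFun (S.E_eq 0) (xp m)) (yp m)
  rw [Matrix.smul_apply, Matrix.of_apply] at h1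
  rw [Matrix.smul_apply, eval_sum S hpt1 hpt0] at h2
  have h3 := h1.symm.trans h2
  rw [smul_eq_mul, smul_eq_mul] at h3
  exact (mul_left_cancel₀ (ninv_ne S) h3).symm

-- entrywise nonnegativity helpers
lemma entry_mul_nonneg {M N : Matrix V V ℝ} (hM : ∀ x y, 0 ≤ M x y)
    (hN : ∀ x y, 0 ≤ N x y) : ∀ x y, 0 ≤ (M * N) x y := fun x y => by
  rw [Matrix.mul_apply]
  exact Finset.sum_nonneg fun k _ => mul_nonneg (hM _ _) (hN _ _)

lemma entry_one_nonneg : ∀ x y : V, 0 ≤ (1 : Matrix V V ℝ) x y := fun x y => by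
  rw [Matrix.one_apply]; split <;> norm_num

lemma entry_pow_nonneg {M : Matrix V V ℝ} (hM : ∀ x y, 0 ≤ M x y) (h : ℕ) :
    ∀ x y, 0 ≤ (M ^ h) x y := by
  induction h with
  | zero => rw [pow_zero]; exact entry_one_nonneg
  | succ n ih => rw [pow_succ]; exact entry_mul_nonneg ih hM

lemma entry_mul_mono {M M' N N' : Matrix V V ℝ} (hM : ∀ x y, 0 ≤ M x y)
    (hN : ∀ x y, 0 ≤ N x y) (h1 : ∀ x y, M x y ≤ M' x y) (h2 : ∀ x y, N x y ≤ N' x y) :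
    ∀ x y, (M * N) x y ≤ (M' * N') x y := fun x y => by
  rw [Matrix.mul_apply, Matrix.mul_apply]
  exact Finset.sum_le_sum fun k _ =>
    mul_le_mul (h1 _ _) (h2 _ _) (hN _ _) (le_trans (hM _ _) (h1 _ _))

-- the Bose-Mesner module
def W : Submodule ℝ (Matrix V V ℝ) := Submodule.span ℝ (Set.range S.A)

lemma A_mem_W (i : Fin (d+1)) : S.A i ∈ W S := Submodule.subset_span ⟨i, rfl⟩

lemma one_mem_W : (1 : Matrix V V ℝ) ∈ W S := by rw [← S.A_zero]; exact A_mem_W S 0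

lemma mul_mem_W {M N : Matrix V V ℝ} (hM : M ∈ W S) (hN : N ∈ W S) : M * N ∈ W S := by
  induction hM using Submodule.span_induction with
  | mem x hx =>
    induction hN using Submodule.span_induction with
    | mem z hz =>
      obtain ⟨i, rfl⟩ := hx; obtain ⟨j, rfl⟩ := hz
      obtain ⟨p, hp⟩ := S.A_mul i j
      rw [hp]
      exact Submodule.sum_mem _ fun k _ => Submodule.smul_mem _ _ (A_mem_W S k)
    | zero => rw [mul_zero]; exact zero_mem _
    | add a b _ _ ha hb => rw [mul_add]; exact add_mem ha hb
    | smul c a _ h => rw [mul_smul_comm]; exact Submodule.smul_mem _ _ h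
  | zero => rw [zero_mul]; exact zero_mem _
  | add a b _ _ ha hb => rw [add_mul]; exact add_mem ha hb
  | smul c a _ h => rw [smul_mul_assoc]; exact Submodule.smul_mem _ _ h

lemma one_add_pow_mem (h : ℕ) : (1 + S.A 1) ^ h ∈ W S := by
  induction h with
  | zero => rw [pow_zero]; exact one_mem_W S
  | succ n ih =>
    rw [pow_succ]
    exact mul_mem_W S ih (add_mem (one_mem_W S) (A_mem_W S 1))

include hpt1 hpt0 in
lemma repr_of_mem {M : Matrix V V ℝ} (hM : M ∈ W S) :
    M = ∑ m, M (xp m) (yp m) • S.A m := by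
  induction hM using Submodule.span_induction with
  | mem x hx =>
    obtain ⟨i, rfl⟩ := hx
    rw [Finset.sum_eq_single i (fun j _ hj => by rw [hpt0 j i (Ne.symm hj), zero_smul])
      (fun h => absurd (Finset.mem_univ i) h), hpt1 i, one_smul]
  | zero => simp
  | add a b _ _ ha hb =>
    conv_lhs => rw [ha, hb]
    rw [← Finset.sum_add_distrib]
    exact Finset.sum_congr rfl fun m _ => by rw [Matrix.add_apply, add_smul]
  | smul c a _ h =>
    conv_lhs => rw [h]
    rw [Finset.smul_sum]
    exact Finset.sum_congr rfl fun m _ => by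
      rw [smul_smul, Matrix.smul_apply, smul_eq_mul]

lemma A1_eq : S.A 1 = ∑ j, S.theta j • S.E j := S.A_eq 1

lemma A1_mul_E (k : Fin (d+1)) : S.A 1 * S.E k = S.theta k • S.E k := by
  rw [A1_eq, Finset.sum_mul]
  rw [Finset.sum_eq_single k]
  · rw [smul_mul_assoc, S.E_mul k k, if_pos rfl]
  · intro j _ hj
    rw [smul_mul_assoc, S.E_mul j k, if_neg hj, smul_zero]
  · intro h; exact absurd (Finset.mem_univ k) h

lemma E_mul_A1 (k : Fin (d+1)) : S.E k * S.A 1 = S.theta k • S.E k := by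
  rw [A1_eq, Finset.mul_sum]
  rw [Finset.sum_eq_single k]
  · rw [mul_smul_comm, S.E_mul k k, if_pos rfl]
  · intro j _ hj
    rw [mul_smul_comm, S.E_mul k j, if_neg (Ne.symm hj), smul_zero]
  · intro h; exact absurd (Finset.mem_univ k) h

lemma pow_E (h : ℕ) : S.A 1 ^ h = ∑ i, S.theta i ^ h • S.E i := by
  induction h with
  | zero => simp [S.E_sum]
  | succ n ih =>
    rw [pow_succ, ih, Finset.sum_mul]
    refine Finset.sum_congr rfl fun i _ => ?_
    rw [smul_mul_assoc, E_mul_A1 S i, smul_smul, pow_succ]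

include hpt1 hpt0 in
lemma E_entry (i m : Fin (d+1)) :
    S.E i (xp m) (yp m) = ((Fintype.card V : ℝ))⁻¹ * S.Q i m := by
  have h := congrFun (congrFun (S.E_eq i) (xp m)) (yp m)
  rw [Matrix.smul_apply, eval_sum S hpt1 hpt0, smul_eq_mul] at h
  exact h

include hpt1 hpt0 in
lemma delta_eq (h : ℕ) (m : Fin (d+1)) :
    (S.A 1 ^ h) (xp m) (yp m) = ((Fintype.card V : ℝ))⁻¹ * ∑ i, S.theta i ^ h * S.Q i m := by
  rw [pow_E, Matrix.sum_apply, Finset.mul_sum]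
  refine Finset.sum_congr rfl fun i _ => ?_
  rw [Matrix.smul_apply, E_entry S hpt1 hpt0, smul_eq_mul]
  ring

lemma aeval_prod_mul_E (s : Finset (Fin (d+1))) (k : Fin (d+1)) :
    (Polynomial.aeval (S.A 1) (∏ j ∈ s, (Polynomial.X - Polynomial.C (S.theta j)))) * S.E k
      = (∏ j ∈ s, (S.theta k - S.theta j)) • S.E k := by
  induction s using Finset.induction with
  | empty => simp
  | @insert a s ha ih =>
    rw [Finset.prod_insert ha, Finset.prod_insert ha, _root_.map_mul, mul_assoc, ih]
    rw [map_sub, Polynomial.aeval_X, Polynomial.aeval_C, mul_smul_comm, sub_mul,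
      ← Algebra.smul_def, A1_mul_E, ← sub_smul, smul_smul, mul_comm]


variable (hθ : Function.Injective S.theta)

include hθ in
lemma prod_diff_ne (i : Fin (d+1)) :
    ∏ j ∈ Finset.univ.erase i, (S.theta i - S.theta j) ≠ 0 := by
  rw [Finset.prod_ne_zero_iff]
  intro j hj
  exact sub_ne_zero_of_ne (fun h => (Finset.mem_erase.mp hj).1 (hθ h).symm)

/-- the Lagrange basis polynomial -/
noncomputable def ell (i : Fin (d+1)) : Polynomial ℝ :=
  Polynomial.C ((∏ j ∈ Finset.univ.erase i, (S.theta i - S.theta j))⁻¹) *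
    ∏ j ∈ Finset.univ.erase i, (Polynomial.X - Polynomial.C (S.theta j))

include hθ in
lemma ell_eval (i : Fin (d+1)) : Polynomial.aeval (S.A 1) (ell S i) = S.E i := by
  have key : ∀ k, Polynomial.aeval (S.A 1) (ell S i) * S.E k
      = if i = k then S.E k else 0 := by
    intro k
    rw [ell, _root_.map_mul, Polynomial.aeval_C, ← Algebra.smul_def, smul_mul_assoc,
      aeval_prod_mul_E, smul_smul]
    by_cases hik : i = k
    · subst hik
      rw [if_pos rfl, inv_mul_cancel₀ (prod_diff_ne S hθ i), one_smul]
    · rw [if_neg hik]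
      have : ∏ j ∈ Finset.univ.erase i, (S.theta k - S.theta j) = 0 :=
        Finset.prod_eq_zero (Finset.mem_erase.mpr ⟨fun h => hik h.symm, Finset.mem_univ k⟩)
          (sub_self _)
      rw [this, mul_zero, zero_smul]
  calc Polynomial.aeval (S.A 1) (ell S i)
      = Polynomial.aeval (S.A 1) (ell S i) * ∑ k, S.E k := by rw [S.E_sum, mul_one]
    _ = ∑ k, (Polynomial.aeval (S.A 1) (ell S i) * S.E k) := by rw [Finset.mul_sum]
    _ = S.E i := by
        rw [Finset.sum_congr rfl fun k _ => key k]
        simp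

include hθ in
lemma ell_natDegree (i : Fin (d+1)) : (ell S i).natDegree ≤ d := by
  rw [ell]
  refine le_trans (Polynomial.natDegree_mul_le) ?_
  rw [Polynomial.natDegree_C, zero_add]
  rw [Polynomial.natDegree_prod_of_monic _ _ (fun j _ => Polynomial.monic_X_sub_C _)]
  simp [Finset.card_erase_of_mem]

include hpt1 hpt0 hθ in
lemma exists_delta (m : Fin (d+1)) :
    ∃ t ≤ d, (S.A 1 ^ t) (xp m) (yp m) ≠ 0 := by
  by_contra hcon
  push_neg at hcon
  set g : Polynomial ℝ := ∑ i, Polynomial.C (S.P m i) * ell S i with hg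
  have hgd : g.natDegree ≤ d := by
    refine le_trans (Polynomial.natDegree_sum_le _ _) ?_
    rw [Finset.fold_max_le]
    refine ⟨Nat.zero_le d, fun i _ => ?_⟩
    exact le_trans Polynomial.natDegree_mul_le
      (by rw [Polynomial.natDegree_C, zero_add]; exact ell_natDegree S hθ i)
  have hgA : Polynomial.aeval (S.A 1) g = S.A m := by
    rw [hg, map_sum, S.A_eq m]
    refine Finset.sum_congr rfl fun i _ => ?_
    rw [_root_.map_mul, Polynomial.aeval_C, ← Algebra.smul_def, ell_eval S hθ]
  have h1 : S.A m (xp m) (yp m) = 1 := hpt1 m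
  rw [← hgA, Polynomial.aeval_eq_sum_range, Matrix.sum_apply] at h1
  have h0 : ∀ t ∈ Finset.range (g.natDegree + 1),
      (g.coeff t • S.A 1 ^ t) (xp m) (yp m) = 0 := by
    intro t ht
    rw [Finset.mem_range] at ht
    rw [Matrix.smul_apply, hcon t (by omega), smul_zero]
  rw [Finset.sum_congr rfl h0, Finset.sum_const, smul_zero] at h1
  exact one_ne_zero h1.symm

/-- Lagrange identity: the `d`-th coefficient of interpolation of `x^h`. -/
lemma lagrange_id {d : ℕ} {θ : Fin (d+1) → ℝ} (hθi : Function.Injective θ) {h : ℕ}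
    (hh : h < d) :
    ∑ i, θ i ^ h * (∏ j ∈ Finset.univ.erase i, (θ i - θ j))⁻¹ = 0 := by
  classical
  set w : Fin (d+1) → ℝ := fun i => (∏ j ∈ Finset.univ.erase i, (θ i - θ j))⁻¹ with hw
  have hprodne : ∀ i : Fin (d+1), ∏ j ∈ Finset.univ.erase i, (θ i - θ j) ≠ 0 := by
    intro i
    rw [Finset.prod_ne_zero_iff]
    intro j hj
    exact sub_ne_zero_of_ne (fun he => (Finset.mem_erase.mp hj).1 (hθi he).symm)
  set q : Polynomial ℝ := ∑ i, Polynomial.C (θ i ^ h * w i) *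
    ∏ j ∈ Finset.univ.erase i, (Polynomial.X - Polynomial.C (θ j)) with hq
  have hpd : ∀ i : Fin (d+1),
      (∏ j ∈ Finset.univ.erase i, (Polynomial.X - Polynomial.C (θ j))).natDegree = d := by
    intro i
    rw [Polynomial.natDegree_prod_of_monic _ _ (fun j _ => Polynomial.monic_X_sub_C _)]
    simp [Finset.card_erase_of_mem]
  have hqd : q.natDegree ≤ d := by
    refine le_trans (Polynomial.natDegree_sum_le _ _) ?_
    rw [Finset.fold_max_le]
    refine ⟨Nat.zero_le d, fun i _ => ?_⟩
    exact le_trans Polynomial.natDegree_mul_le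
      (by rw [Polynomial.natDegree_C, zero_add, hpd i])
  have heval : ∀ k, q.eval (θ k) = θ k ^ h := by
    intro k
    rw [hq, Polynomial.eval_finset_sum]
    rw [Finset.sum_eq_single k]
    · rw [Polynomial.eval_mul, Polynomial.eval_C, Polynomial.eval_prod]
      have : ∏ j ∈ Finset.univ.erase k, (Polynomial.X - Polynomial.C (θ j)).eval (θ k)
          = ∏ j ∈ Finset.univ.erase k, (θ k - θ j) := by
        refine Finset.prod_congr rfl fun j _ => by
          rw [Polynomial.eval_sub, Polynomial.eval_X, Polynomial.eval_C]
      rw [this, mul_assoc, hw, inv_mul_cancel₀ (hprodne k), mul_one]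
    · intro i _ hik
      rw [Polynomial.eval_mul, Polynomial.eval_prod]
      have : ((Polynomial.X - Polynomial.C (θ k)).eval (θ k) : ℝ) = 0 := by
        rw [Polynomial.eval_sub, Polynomial.eval_X, Polynomial.eval_C, sub_self]
      rw [Finset.prod_eq_zero (Finset.mem_erase.mpr ⟨fun he => hik he.symm,
        Finset.mem_univ k⟩) this, mul_zero]
    · intro hk; exact absurd (Finset.mem_univ k) hk
  have hzero : q - Polynomial.X ^ h = 0 := by
    refine Polynomial.eq_zero_of_natDegree_lt_card_of_eval_eq_zero _ hθi
      (fun i => ?_) ?_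
    · rw [Polynomial.eval_sub, heval, Polynomial.eval_pow, Polynomial.eval_X, sub_self]
    · refine lt_of_le_of_lt (Polynomial.natDegree_sub_le _ _) ?_
      rw [Fintype.card_fin]
      rw [Polynomial.natDegree_X_pow]
      omega
  have hcoeff : q.coeff d = 0 := by
    have := congrArg (fun p => Polynomial.coeff p d) hzero
    simp only [Polynomial.coeff_sub, Polynomial.coeff_zero] at this
    rw [Polynomial.coeff_X_pow, if_neg (by omega)] at this
    linarith
  rw [hq, Polynomial.finset_sum_coeff] at hcoeff
  have : ∀ i : Fin (d+1), (Polynomial.C (θ i ^ h * w i) *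
      ∏ j ∈ Finset.univ.erase i, (Polynomial.X - Polynomial.C (θ j))).coeff d
      = θ i ^ h * w i := by
    intro i
    rw [Polynomial.coeff_C_mul]
    have hm : (∏ j ∈ Finset.univ.erase i, (Polynomial.X - Polynomial.C (θ j))).Monic :=
      Polynomial.monic_prod_of_monic _ _ (fun j _ => Polynomial.monic_X_sub_C _)
    have : (∏ j ∈ Finset.univ.erase i, (Polynomial.X - Polynomial.C (θ j))).coeff d = 1 := by
      have h2 := hm.coeff_natDegree
      rw [hpd i] at h2
      exact h2
    rw [this, mul_one]
  rw [Finset.sum_congr rfl fun i _ => this i] at hcoeff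
  exact hcoeff

/-- The condition on `l` in Theorem 1.1. -/
def Cond (l : Fin (d+1)) : Prop :=
  ∀ i : Fin (d + 1), i ≠ 0 →
    (∏ j ∈ (Finset.univ.erase 0).erase i,
      (S.theta 0 - S.theta j) / (S.theta i - S.theta j)) = - S.Q i l

include hθ in
lemma erase_prod_ne (i : Fin (d+1)) :
    ∏ j ∈ (Finset.univ.erase 0).erase i, (S.theta i - S.theta j) ≠ 0 := by
  rw [Finset.prod_ne_zero_iff]
  intro j hj
  exact sub_ne_zero_of_ne (fun h => (Finset.mem_erase.mp hj).1 (hθ h).symm)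

include hθ in
lemma erase_prod_ne' (i : Fin (d+1)) :
    ∏ j ∈ (Finset.univ.erase i), (S.theta i - S.theta j) ≠ 0 := prod_diff_ne S hθ i

include hpt1 hpt0 hθ in
lemma Q_eq_of_cond {l : Fin (d+1)} (hl : Cond S l) (i : Fin (d+1)) :
    S.Q i l = (∏ j ∈ Finset.univ.erase 0, (S.theta 0 - S.theta j)) *
      (∏ j ∈ Finset.univ.erase i, (S.theta i - S.theta j))⁻¹ := by
  by_cases hi : i = 0
  · subst hi
    rw [Q_zero S hpt1 hpt0, mul_inv_cancel₀ (prod_diff_ne S hθ 0)]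
  · have hmem : i ∈ Finset.univ.erase (0 : Fin (d+1)) :=
      Finset.mem_erase.mpr ⟨hi, Finset.mem_univ i⟩
    have hmem' : (0 : Fin (d+1)) ∈ Finset.univ.erase i :=
      Finset.mem_erase.mpr ⟨fun h => hi h.symm, Finset.mem_univ 0⟩
    have hCc : ∏ j ∈ Finset.univ.erase 0, (S.theta 0 - S.theta j)
        = (S.theta 0 - S.theta i) * ∏ j ∈ (Finset.univ.erase 0).erase i,
          (S.theta 0 - S.theta j) := (Finset.mul_prod_erase _ _ hmem).symm
    have hD : ∏ j ∈ Finset.univ.erase i, (S.theta i - S.theta j)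
        = (S.theta i - S.theta 0) * ∏ j ∈ (Finset.univ.erase 0).erase i,
          (S.theta i - S.theta j) := by
      rw [← Finset.mul_prod_erase _ _ hmem', Finset.erase_right_comm]
    have hQ := hl i hi
    rw [Finset.prod_div_distrib] at hQ
    set N := ∏ j ∈ (Finset.univ.erase 0).erase i, (S.theta 0 - S.theta j)
    set D := ∏ j ∈ (Finset.univ.erase 0).erase i, (S.theta i - S.theta j)
    have hDne : D ≠ 0 := erase_prod_ne S hθ i
    have hi0 : S.theta i - S.theta 0 ≠ 0 :=
      sub_ne_zero_of_ne (fun h => hi (hθ h))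
    have hQil : S.Q i l = -(N / D) := by rw [hQ, neg_neg]
    rw [hQil, hCc, hD]
    field_simp
    ring

include hpt1 hpt0 hθ in
lemma orth_of_cond {l : Fin (d+1)} (hl : Cond S l) {h : ℕ} (hh : h < d) :
    ∑ i, S.theta i ^ h * S.Q i l = 0 := by
  have : ∀ i : Fin (d+1), S.theta i ^ h * S.Q i l
      = (∏ j ∈ Finset.univ.erase 0, (S.theta 0 - S.theta j)) *
        (S.theta i ^ h * (∏ j ∈ Finset.univ.erase i, (S.theta i - S.theta j))⁻¹) := by
    intro i
    rw [Q_eq_of_cond S hpt1 hpt0 hθ hl i]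
    ring
  rw [Finset.sum_congr rfl fun i _ => this i, ← Finset.mul_sum,
    lagrange_id hθ hh, mul_zero]

include hpt1 hpt0 hθ in
lemma delta_zero_of_cond {l : Fin (d+1)} (hl : Cond S l) {h : ℕ} (hh : h < d) :
    (S.A 1 ^ h) (xp l) (yp l) = 0 := by
  rw [delta_eq S hpt1 hpt0, orth_of_cond S hpt1 hpt0 hθ hl hh, mul_zero]

include hpt1 hpt0 hθ in
lemma cond_of_orth (hd : 1 ≤ d) {l : Fin (d+1)}
    (horth : ∀ h < d, ∑ i, S.theta i ^ h * S.Q i l = 0) : Cond S l := by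
  have hpoly : ∀ p : Polynomial ℝ, p.natDegree < d →
      ∑ k, p.eval (S.theta k) * S.Q k l = 0 := by
    intro p hp
    have hk : ∀ k : Fin (d+1), p.eval (S.theta k) * S.Q k l
        = ∑ t ∈ Finset.range (p.natDegree + 1), p.coeff t * (S.theta k ^ t * S.Q k l) := by
      intro k
      rw [Polynomial.eval_eq_sum_range, Finset.sum_mul]
      exact Finset.sum_congr rfl fun t _ => by ring
    rw [Finset.sum_congr rfl fun k _ => hk k, Finset.sum_comm]
    refine Finset.sum_eq_zero fun t ht => ?_
    rw [Finset.mem_range] at ht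
    rw [← Finset.mul_sum, horth t (by omega), mul_zero]
  intro i hi
  set p : Polynomial ℝ := ∏ j ∈ (Finset.univ.erase (0 : Fin (d+1))).erase i,
    (Polynomial.X - Polynomial.C (S.theta j)) with hp
  have hcard : ((Finset.univ.erase (0 : Fin (d+1))).erase i).card = d - 1 := by
    rw [Finset.card_erase_of_mem (Finset.mem_erase.mpr ⟨hi, Finset.mem_univ i⟩),
      Finset.card_erase_of_mem (Finset.mem_univ 0), Finset.card_univ, Fintype.card_fin]
    omega
  have hpd : p.natDegree < d := by
    rw [hp, Polynomial.natDegree_prod_of_monic _ _ (fun j _ => Polynomial.monic_X_sub_C _)]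
    simp only [Polynomial.natDegree_X_sub_C, Finset.sum_const, smul_eq_mul, mul_one, hcard]
    omega
  have hsum := hpoly p hpd
  have hmem : i ∈ Finset.univ.erase (0 : Fin (d+1)) :=
    Finset.mem_erase.mpr ⟨hi, Finset.mem_univ i⟩
  rw [← Finset.add_sum_erase _ _ (Finset.mem_univ (0 : Fin (d+1))),
    ← Finset.add_sum_erase _ _ hmem] at hsum
  have hrest : ∑ k ∈ (Finset.univ.erase (0 : Fin (d+1))).erase i,
      p.eval (S.theta k) * S.Q k l = 0 := by
    refine Finset.sum_eq_zero fun k hk => ?_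
    have : p.eval (S.theta k) = 0 := by
      rw [hp, Polynomial.eval_prod]
      exact Finset.prod_eq_zero hk
        (by rw [Polynomial.eval_sub, Polynomial.eval_X, Polynomial.eval_C, sub_self])
    rw [this, zero_mul]
  rw [hrest, add_zero] at hsum
  have hev : ∀ k : Fin (d+1), p.eval (S.theta k)
      = ∏ j ∈ (Finset.univ.erase (0 : Fin (d+1))).erase i, (S.theta k - S.theta j) := by
    intro k
    rw [hp, Polynomial.eval_prod]
    exact Finset.prod_congr rfl fun j _ => by
      rw [Polynomial.eval_sub, Polynomial.eval_X, Polynomial.eval_C]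
  rw [hev 0, hev i, Q_zero S hpt1 hpt0, mul_one] at hsum
  have hDne : ∏ j ∈ (Finset.univ.erase (0 : Fin (d+1))).erase i,
      (S.theta i - S.theta j) ≠ 0 := erase_prod_ne S hθ i
  rw [Finset.prod_div_distrib, div_eq_iff hDne]
  linarith [hsum]

include hpt1 hpt0 hθ in
lemma forward (hd : 1 ≤ d)
    (ξ : Equiv.Perm (Fin (d+1))) (hξ0 : ξ 0 = 0) (v : Fin (d+1) → Polynomial ℝ)
    (hv : ∀ i, (v i).natDegree = (i : ℕ) ∧ Polynomial.aeval (S.A 1) (v i) = S.A (ξ i)) :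
    Cond S (ξ (Fin.last d)) := by
  have SPAN : ∀ n, n ≤ d → (S.A 1) ^ n ∈ Submodule.span ℝ
      ((fun t : Fin (d+1) => S.A (ξ t)) '' {t | (t : ℕ) ≤ n}) := by
    intro n
    induction n using Nat.strong_induction_on with
    | _ n IH =>
      intro hn
      rcases Nat.eq_zero_or_pos n with h0 | hpos
      · subst h0
        rw [pow_zero]
        have h1 : (1 : Matrix V V ℝ) = S.A (ξ 0) := by rw [hξ0, S.A_zero]
        rw [h1]
        exact Submodule.subset_span ⟨0, by simp, rfl⟩
      · set i : Fin (d+1) := ⟨n, by omega⟩ with hidef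
        obtain ⟨hdeg, heval⟩ := hv i
        have hin : (i : ℕ) = n := rfl
        rw [hin] at hdeg
        have hvne : v i ≠ 0 := fun h => by
          rw [h, Polynomial.natDegree_zero] at hdeg; omega
        set c := (v i).leadingCoeff with hcdef
        have hc : c ≠ 0 := Polynomial.leadingCoeff_ne_zero.mpr hvne
        have heq := Polynomial.eraseLead_add_C_mul_X_pow (v i)
        rw [hdeg] at heq
        have haev : S.A (ξ i) = Polynomial.aeval (S.A 1) ((v i).eraseLead) + c • (S.A 1) ^ n := by
          rw [← heval]
          conv_lhs => rw [← heq]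
          rw [map_add, _root_.map_mul, Polynomial.aeval_C, ← Algebra.smul_def,
            map_pow, Polynomial.aeval_X]
        have hpow : (S.A 1) ^ n = c⁻¹ • (S.A (ξ i) - Polynomial.aeval (S.A 1) ((v i).eraseLead)) := by
          rw [haev]
          rw [add_sub_cancel_left, smul_smul, inv_mul_cancel₀ hc, one_smul]
        rw [hpow]
        refine Submodule.smul_mem _ _ (sub_mem ?_ ?_)
        · exact Submodule.subset_span ⟨i, by simp [hin], rfl⟩
        · -- aeval of eraseLead lies in span of lower powers
          have hnd : ((v i).eraseLead).natDegree ≤ n - 1 := by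
            have := Polynomial.eraseLead_natDegree_le (v i)
            omega
          rw [Polynomial.aeval_eq_sum_range]
          refine Submodule.sum_mem _ fun k hk => ?_
          rw [Finset.mem_range] at hk
          have hkn : k < n := by omega
          refine Submodule.smul_mem _ _ ?_
          refine Submodule.span_le.mpr ?_ (IH k hkn (by omega))
          intro M hM
          obtain ⟨t, ht, rfl⟩ := hM
          exact Submodule.subset_span ⟨t, by simp only [Set.mem_setOf_eq] at ht ⊢; omega, rfl⟩
  have hgen : ∀ h, h < d → ∀ M, M ∈ Submodule.span ℝ
      ((fun t : Fin (d+1) => S.A (ξ t)) '' {t | (t : ℕ) ≤ h}) →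
      M (xp (ξ (Fin.last d))) (yp (ξ (Fin.last d))) = 0 := by
    intro h hh M hM
    induction hM using Submodule.span_induction with
    | mem x hx =>
      obtain ⟨t, ht, rfl⟩ := hx
      refine hpt0 _ _ ?_
      intro he
      have ht' : (t : ℕ) ≤ h := ht
      have := ξ.injective he
      rw [this] at ht'
      simp only [Fin.val_last] at ht'
      omega
    | zero => rfl
    | add a b _ _ ha hb => rw [Matrix.add_apply, ha, hb, add_zero]
    | smul r a _ hA => rw [Matrix.smul_apply, hA, smul_zero]
  have hzero : ∀ h, h < d →
      (S.A 1 ^ h) (xp (ξ (Fin.last d))) (yp (ξ (Fin.last d))) = 0 :=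
    fun h hh => hgen h hh _ (SPAN h (le_of_lt hh))
  refine cond_of_orth S hpt1 hpt0 hθ hd (fun h hh => ?_)
  have := hzero h hh
  rw [delta_eq S hpt1 hpt0] at this
  rcases mul_eq_zero.mp this with h1 | h2
  · exact absurd h1 (ninv_ne S)
  · exact h2

open scoped Classical in
noncomputable def gam (xp yp : Fin (d+1) → V) (h : ℕ) (m : Fin (d+1)) : ℝ :=
  ((1 + S.A 1) ^ h) (xp m) (yp m)

open scoped Classical in
noncomputable def TT (xp yp : Fin (d+1) → V) (h : ℕ) : Finset (Fin (d+1)) :=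
  Finset.univ.filter (fun m => gam S xp yp h m ≠ 0)

lemma B_nonneg : ∀ x y : V, 0 ≤ (1 + S.A 1) x y := fun x y => by
  rw [Matrix.add_apply]
  exact add_nonneg (entry_one_nonneg x y) (A_nonneg S 1 x y)

lemma gam_nonneg (xp yp : Fin (d+1) → V) (h : ℕ) (m : Fin (d+1)) :
    0 ≤ gam S xp yp h m := entry_pow_nonneg (B_nonneg S) h _ _

lemma mem_TT {xp yp : Fin (d+1) → V} {h : ℕ} {m : Fin (d+1)} :
    m ∈ TT S xp yp h ↔ gam S xp yp h m ≠ 0 := by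
  classical
  simp [TT]

include hpt1 hpt0 in
lemma B_repr (h : ℕ) : (1 + S.A 1) ^ h = ∑ m, gam S xp yp h m • S.A m :=
  repr_of_mem S hpt1 hpt0 (one_add_pow_mem S h)

include hpt1 hpt0 in
lemma gam_zero (m : Fin (d+1)) :
    gam S xp yp 0 m = if m = 0 then 1 else 0 := by
  rw [gam, pow_zero, ← S.A_zero]
  split
  · next hm => rw [hm]; exact hpt1 0
  · next hm => exact hpt0 m 0 (fun h => hm h.symm)

include hpt1 hpt0 in
lemma TT_zero : TT S xp yp 0 = {0} := by
  ext m
  rw [mem_TT, Finset.mem_singleton, gam_zero S hpt1 hpt0]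
  split
  · next hm => simp [hm]
  · next hm => simp [hm]

include hpt1 hpt0 in
lemma gam_one (m : Fin (d+1)) :
    gam S xp yp 1 m = (if m = 0 then 1 else 0) + (if m = 1 then 1 else 0) := by
  rw [gam, pow_one, Matrix.add_apply]
  congr 1
  · rw [← S.A_zero]
    split
    · next hm => rw [hm]; exact hpt1 0
    · next hm => exact hpt0 m 0 (fun h => hm h.symm)
  · split
    · next hm => rw [hm]; exact hpt1 1
    · next hm => exact hpt0 m 1 (fun h => hm h.symm)

include hpt1 hpt0 in
lemma TT_one (hd : 1 ≤ d) : TT S xp yp 1 = {0, 1} := by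
  have h01 : (0 : Fin (d+1)) ≠ 1 := by
    intro h
    have := congrArg Fin.val h
    rw [Fin.val_zero, Fin.val_one'] at this
    rw [Nat.mod_eq_of_lt (by omega)] at this
    omega
  ext m
  rw [mem_TT, Finset.mem_insert, Finset.mem_singleton, gam_one S hpt1 hpt0]
  by_cases h0 : m = 0
  · subst h0
    rw [if_pos rfl, if_neg h01]
    norm_num
  · by_cases h1 : m = 1
    · subst h1
      rw [if_neg (fun h => h01 h.symm), if_pos rfl]
      norm_num
    · rw [if_neg h0, if_neg h1]
      simp [h0, h1]

noncomputable def bet (xp yp : Fin (d+1) → V) (k m : Fin (d+1)) : ℝ :=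
  (S.A k * S.A 1) (xp m) (yp m)

lemma bet_nonneg (xp yp : Fin (d+1) → V) (k m : Fin (d+1)) : 0 ≤ bet S xp yp k m :=
  entry_mul_nonneg (A_nonneg S k) (A_nonneg S 1) _ _

include hpt1 hpt0 in
lemma gam_rec (h : ℕ) (m : Fin (d+1)) :
    gam S xp yp (h+1) m = gam S xp yp h m + ∑ k, gam S xp yp h k * bet S xp yp k m := by
  have hBA : (1 + S.A 1) ^ (h+1) = (1 + S.A 1) ^ h + ∑ k, gam S xp yp h k • (S.A k * S.A 1) := by
    rw [pow_succ, mul_add, mul_one]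
    congr 1
    conv_lhs => rw [B_repr S hpt1 hpt0 h]
    rw [Finset.sum_mul]
    exact Finset.sum_congr rfl fun k _ => smul_mul_assoc _ _ _
  rw [gam, hBA, Matrix.add_apply, Matrix.sum_apply]
  refine congrArg₂ (· + ·) rfl (Finset.sum_congr rfl fun k _ => ?_)
  rw [Matrix.smul_apply, smul_eq_mul]
  rfl

include hpt1 hpt0 in
lemma mem_TT_succ (h : ℕ) (m : Fin (d+1)) :
    m ∈ TT S xp yp (h+1) ↔ m ∈ TT S xp yp h ∨ ∃ k ∈ TT S xp yp h, bet S xp yp k m ≠ 0 := by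
  have hterm : ∀ k : Fin (d+1), 0 ≤ gam S xp yp h k * bet S xp yp k m :=
    fun k => mul_nonneg (gam_nonneg S xp yp h k) (bet_nonneg S xp yp k m)
  have hiff : gam S xp yp (h+1) m = 0 ↔ gam S xp yp h m = 0 ∧
      ∀ k : Fin (d+1), gam S xp yp h k * bet S xp yp k m = 0 := by
    rw [gam_rec S hpt1 hpt0]
    rw [add_eq_zero_iff_of_nonneg (gam_nonneg S xp yp h m)
      (Finset.sum_nonneg fun k _ => hterm k)]
    constructor
    · rintro ⟨h1, h2⟩
      exact ⟨h1, fun k => (Finset.sum_eq_zero_iff_of_nonneg (fun k _ => hterm k)).mp h2 k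
        (Finset.mem_univ k)⟩
    · rintro ⟨h1, h2⟩
      exact ⟨h1, Finset.sum_eq_zero fun k _ => h2 k⟩
  simp only [mem_TT]
  constructor
  · intro hne
    by_contra hcon
    push_neg at hcon
    obtain ⟨h1, h2⟩ := hcon
    apply hne
    refine hiff.mpr ⟨h1, fun k => ?_⟩
    by_cases hk : gam S xp yp h k = 0
    · rw [hk, zero_mul]
    · rw [h2 k hk, mul_zero]
  · intro hor hzero
    obtain ⟨h1, h2⟩ := hiff.mp hzero
    rcases hor with ha | ⟨k, hk1, hk2⟩
    · exact ha h1
    · rcases mul_eq_zero.mp (h2 k) with hx | hx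
      · exact hk1 hx
      · exact hk2 hx

include hpt1 hpt0 in
lemma TT_mono {a b : ℕ} (hab : a ≤ b) : TT S xp yp a ⊆ TT S xp yp b := by
  induction b with
  | zero => rw [Nat.le_zero.mp hab]
  | succ n ih =>
    rcases Nat.lt_or_ge a (n+1) with h | h
    · intro m hm
      exact (mem_TT_succ S hpt1 hpt0 n m).mpr (Or.inl (ih (by omega) hm))
    · have : a = n + 1 := by omega
      rw [this]

include hpt1 hpt0 in
lemma TT_stab {h : ℕ} (heq : TT S xp yp h = TT S xp yp (h+1)) :
    ∀ t, TT S xp yp (h + t) = TT S xp yp h := by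
  intro t
  induction t with
  | zero => rfl
  | succ n ih =>
    have : h + (n + 1) = (h + n) + 1 := by omega
    rw [this]
    ext m
    rw [mem_TT_succ S hpt1 hpt0, ih, ← mem_TT_succ S hpt1 hpt0, ← heq]

lemma pow_entry_le (t : ℕ) (x y : V) :
    (S.A 1 ^ t) x y ≤ ((1 + S.A 1) ^ t) x y := by
  induction t generalizing x y with
  | zero => simp
  | succ n ih =>
    rw [pow_succ, pow_succ]
    refine entry_mul_mono (entry_pow_nonneg (A_nonneg S 1) n) (A_nonneg S 1)
      (fun x y => ih x y) (fun x y => by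
        rw [Matrix.add_apply]
        have := entry_one_nonneg (V := V) x y
        linarith) x y

include hpt1 hpt0 hθ in
lemma TT_full : TT S xp yp d = Finset.univ := by
  refine Finset.eq_univ_of_forall fun m => ?_
  obtain ⟨t, htd, hne⟩ := exists_delta S hpt1 hpt0 hθ m
  have h1 : 0 < (S.A 1 ^ t) (xp m) (yp m) :=
    lt_of_le_of_ne (entry_pow_nonneg (A_nonneg S 1) t _ _) (Ne.symm hne)
  have h2 : m ∈ TT S xp yp t := by
    rw [mem_TT, gam]
    have := pow_entry_le S t (xp m) (yp m)
    intro hz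
    rw [hz] at this
    linarith
  exact TT_mono S hpt1 hpt0 htd h2

lemma gam_eq_sum (xp yp : Fin (d+1) → V) (h : ℕ) (m : Fin (d+1)) :
    gam S xp yp h m = ∑ t ∈ Finset.range (h+1),
      (h.choose t : ℝ) * (S.A 1 ^ t) (xp m) (yp m) := by
  have hcast : ∀ c : ℕ, ∀ M : Matrix V V ℝ, M * (c : Matrix V V ℝ) = (c : ℝ) • M := by
    intro c M
    have : (c : Matrix V V ℝ) = (c : ℝ) • (1 : Matrix V V ℝ) := by
      rw [Matrix.smul_one_eq_diagonal]
      exact (Matrix.diagonal_natCast c).symm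
    rw [this, mul_smul_comm, mul_one]
  have hB : (1 + S.A 1) ^ h = ∑ t ∈ Finset.range (h+1), (h.choose t : ℝ) • S.A 1 ^ t := by
    rw [add_comm (1 : Matrix V V ℝ) (S.A 1)]
    rw [Commute.add_pow (Commute.one_right (S.A 1))]
    refine Finset.sum_congr rfl fun t ht => ?_
    rw [one_pow, mul_one, hcast]
  rw [gam, hB, Matrix.sum_apply]
  exact Finset.sum_congr rfl fun t _ => by rw [Matrix.smul_apply, smul_eq_mul]

include hpt1 hpt0 hθ in
lemma not_mem_TT_of_cond (hd : 1 ≤ d) {l : Fin (d+1)} (hl : Cond S l) :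
    l ∉ TT S xp yp (d - 1) := by
  rw [mem_TT, not_not, gam_eq_sum]
  refine Finset.sum_eq_zero fun t ht => ?_
  rw [Finset.mem_range] at ht
  rw [delta_zero_of_cond S hpt1 hpt0 hθ hl (by omega), mul_zero]

include hpt1 hpt0 hθ in
lemma TT_card (hd : 1 ≤ d) {l : Fin (d+1)} (hl : Cond S l) :
    ∀ h ≤ d, (TT S xp yp h).card = h + 1 := by
  have hstrict : ∀ h < d, TT S xp yp h ≠ TT S xp yp (h+1) := by
    intro h hh heq
    have hstab := TT_stab S hpt1 hpt0 heq
    have h1 : TT S xp yp (d-1) = TT S xp yp h := by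
      have := hstab (d - 1 - h)
      rw [show h + (d-1-h) = d-1 from by omega] at this
      exact this
    have h2 : TT S xp yp d = TT S xp yp h := by
      have := hstab (d - h)
      rw [show h + (d-h) = d from by omega] at this
      exact this
    have hnm := not_mem_TT_of_cond S hpt1 hpt0 hθ hd hl
    rw [h1, ← h2, TT_full S hpt1 hpt0 hθ] at hnm
    exact hnm (Finset.mem_univ l)
  have hlt : ∀ h < d, (TT S xp yp h).card < (TT S xp yp (h+1)).card := by
    intro h hh
    exact Finset.card_lt_card (Finset.ssubset_iff_subset_ne.mpr
      ⟨TT_mono S hpt1 hpt0 (Nat.le_succ h), hstrict h hh⟩)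
  have hlb : ∀ h, h ≤ d → h + 1 ≤ (TT S xp yp h).card := by
    intro h
    induction h with
    | zero => intro _; rw [TT_zero S hpt1 hpt0]; simp
    | succ n ih =>
      intro hn
      have h1 := hlt n (by omega)
      have h2 := ih (by omega)
      omega
  have hstep : ∀ a b, a + b ≤ d → (TT S xp yp a).card + b ≤ (TT S xp yp (a+b)).card := by
    intro a b
    induction b with
    | zero => intro _; simp
    | succ n ih =>
      intro hab
      have h1 := ih (by omega)
      have h2 := hlt (a+n) (by omega)
      rw [show a + (n+1) = (a+n)+1 from by omega]
      omega
  intro h hh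
  have hub := hstep h (d - h) (by omega)
  rw [show h + (d-h) = d from by omega, TT_full S hpt1 hpt0 hθ,
    Finset.card_univ, Fintype.card_fin] at hub
  have := hlb h hh
  omega

include hpt1 hpt0 hθ in
lemma construct (hd : 1 ≤ d) {l : Fin (d+1)} (hl : Cond S l) :
    ∃ ξ : Equiv.Perm (Fin (d + 1)), ξ 0 = 0 ∧ ξ 1 = 1 ∧ ξ (Fin.last d) = l ∧
      ∃ v : Fin (d + 1) → Polynomial ℝ,
        ∀ i, (v i).natDegree = (i : ℕ) ∧ Polynomial.aeval (S.A 1) (v i) = S.A (ξ i) := by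
  classical
  have hcard := TT_card S hpt1 hpt0 hθ hd hl
  have h01 : ((1 : Fin (d+1)) : ℕ) = 1 := by
    rw [Fin.val_one']; exact Nat.mod_eq_of_lt (by omega)
  have hkey : ∀ i : Fin (d+1), ∃ a : Fin (d+1), a ∈ TT S xp yp (i : ℕ) ∧
      (∀ t, t < (i : ℕ) → a ∉ TT S xp yp t) ∧
      ((i : ℕ) = 0 → a = 0) ∧ ((i : ℕ) = 1 → a = 1) ∧ ((i : ℕ) = d → a = l) := by
    intro i
    rcases Nat.eq_zero_or_pos (i : ℕ) with h0 | hpos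
    · refine ⟨0, ?_, fun t ht => by omega, fun _ => rfl,
        fun h => by omega, fun h => by omega⟩
      have hmem0 : (0 : Fin (d+1)) ∈ TT S xp yp 0 := by
        rw [TT_zero S hpt1 hpt0]; exact Finset.mem_singleton_self 0
      simpa only [h0] using hmem0
    · set n := (i : ℕ) with hn
      have hnd : n ≤ d := by have := i.isLt; omega
      have hcard1 : (TT S xp yp n).card = n + 1 := hcard n hnd
      have hcard2 : (TT S xp yp (n-1)).card = n := by
        have := hcard (n-1) (by omega)
        rw [show n-1+1 = n from by omega] at this
        exact this
      have hex : ∃ a, a ∈ TT S xp yp n ∧ a ∉ TT S xp yp (n-1) := by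
        by_contra hcon
        push_neg at hcon
        have hsub : TT S xp yp n ⊆ TT S xp yp (n-1) := fun a ha => hcon a ha
        have := Finset.card_le_card hsub
        omega
      obtain ⟨a, haT, haN⟩ := hex
      refine ⟨a, haT, ?_, fun h => by omega, ?_, ?_⟩
      · intro t ht
        exact fun hmem => haN (TT_mono S hpt1 hpt0 (by omega : t ≤ n - 1) hmem)
      · intro h1
        have haT1 : a ∈ TT S xp yp 1 := by rw [h1] at haT; exact haT
        have haN0 : a ∉ TT S xp yp 0 := by
          rw [show n - 1 = 0 from by omega] at haN; exact haN
        rw [TT_one S hpt1 hpt0 hd, Finset.mem_insert, Finset.mem_singleton] at haT1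
        rcases haT1 with h | h
        · exfalso
          apply haN0
          rw [TT_zero S hpt1 hpt0, h]
          exact Finset.mem_singleton_self 0
        · exact h
      · intro hnd'
        have hlN : l ∉ TT S xp yp (d-1) := not_mem_TT_of_cond S hpt1 hpt0 hθ hd hl
        have haN' : a ∉ TT S xp yp (d-1) := by rw [show d - 1 = n - 1 from by omega]; exact haN
        have hcompl : (Finset.univ \ TT S xp yp (d-1)).card = 1 := by
          rw [Finset.card_sdiff_of_subset (Finset.subset_univ _), Finset.card_univ, Fintype.card_fin]
          have := hcard (d-1) (by omega)
          omega
        refine Finset.card_le_one.mp (le_of_eq hcompl) a ?_ l ?_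
        · exact Finset.mem_sdiff.mpr ⟨Finset.mem_univ a, haN'⟩
        · exact Finset.mem_sdiff.mpr ⟨Finset.mem_univ l, hlN⟩
  choose f hf1 hf2 hf3 hf4 hf5 using hkey
  have hfinj : Function.Injective f := by
    intro i j hij
    rcases lt_trichotomy (i : ℕ) (j : ℕ) with h | h | h
    · have h1 := hf1 i
      rw [hij] at h1
      exact absurd h1 (hf2 j _ h)
    · exact Fin.ext h
    · have h1 := hf1 j
      rw [← hij] at h1
      exact absurd h1 (hf2 i _ h)
  have hbij : Function.Bijective f :=
    (Fintype.bijective_iff_injective_and_card f).mpr ⟨hfinj, rfl⟩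
  have POLY : ∀ n : ℕ, ∀ i : Fin (d+1), (i:ℕ) = n → ∃ q : Polynomial ℝ,
      q.natDegree = n ∧ Polynomial.aeval (S.A 1) q = S.A (f i) := by
    intro n
    induction n using Nat.strong_induction_on with
    | _ n IH =>
      intro i hin
      rcases Nat.eq_zero_or_pos n with h0 | hpos
      · subst h0
        refine ⟨1, Polynomial.natDegree_one, ?_⟩
        rw [_root_.map_one, hf3 i hin, S.A_zero]
      · have hnd : n ≤ d := by have := i.isLt; omega
        have hmemrep : ∀ m ∈ TT S xp yp (n-1), ∃ t : Fin (d+1), (t:ℕ) < n ∧ f t = m := by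
          have hfilters : (Finset.univ.filter (fun t : Fin (d+1) => (t:ℕ) < n))
              = Finset.univ.image (Fin.castLE (show n ≤ d+1 by omega)) := by
            ext t
            simp only [Finset.mem_filter, Finset.mem_univ, true_and, Finset.mem_image]
            constructor
            · intro ht; exact ⟨⟨(t:ℕ), ht⟩, Fin.ext rfl⟩
            · rintro ⟨u, rfl⟩; exact u.isLt
          have himg : (Finset.univ.filter (fun t : Fin (d+1) => (t:ℕ) < n)).image f
              = TT S xp yp (n-1) := by
            apply Finset.eq_of_subset_of_card_le
            · intro m hm
              rw [Finset.mem_image] at hm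
              obtain ⟨t, ht, rfl⟩ := hm
              rw [Finset.mem_filter] at ht
              exact TT_mono S hpt1 hpt0 (by omega : (t:ℕ) ≤ n-1) (hf1 t)
            · rw [Finset.card_image_of_injective _ hfinj]
              rw [hfilters, Finset.card_image_of_injective _ (Fin.castLE_injective _),
                Finset.card_univ, Fintype.card_fin]
              have := hcard (n-1) (by omega)
              omega
          intro m hm
          rw [← himg, Finset.mem_image] at hm
          obtain ⟨t, ht, hft⟩ := hm
          exact ⟨t, (Finset.mem_filter.mp ht).2, hft⟩
        have hrep' : ∀ m : Fin (d+1), ∃ qm : Polynomial ℝ,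
            m ∈ TT S xp yp (n-1) → qm.natDegree < n ∧ Polynomial.aeval (S.A 1) qm = S.A m := by
          intro m
          by_cases hm : m ∈ TT S xp yp (n-1)
          · obtain ⟨t, htn, hft⟩ := hmemrep m hm
            obtain ⟨q, hq1, hq2⟩ := IH (t:ℕ) htn t rfl
            exact ⟨q, fun _ => ⟨by rw [hq1]; exact htn, by rw [hq2, hft]⟩⟩
          · exact ⟨0, fun h => absurd h hm⟩
        choose qm hqm using hrep'
        have hfiT : f i ∈ TT S xp yp n := by
          have := hf1 i; rw [hin] at this; exact this
        have hc : gam S xp yp n (f i) ≠ 0 := (mem_TT S).mp hfiT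
        have hfiN : f i ∉ TT S xp yp (n-1) := by
          have := hf2 i (n-1) (by omega)
          exact this
        have hdiffsub : TT S xp yp (n-1) ⊆ TT S xp yp n :=
          TT_mono S hpt1 hpt0 (by omega)
        have hdiffcard : (TT S xp yp n \ TT S xp yp (n-1)).card = 1 := by
          rw [Finset.card_sdiff_of_subset hdiffsub, hcard n hnd]
          have := hcard (n-1) (by omega)
          omega
        have huniq : ∀ m, m ∈ TT S xp yp n → m ∉ TT S xp yp (n-1) → m = f i := by
          intro m hm1 hm2
          exact Finset.card_le_one.mp (le_of_eq hdiffcard) m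
            (Finset.mem_sdiff.mpr ⟨hm1, hm2⟩) (f i) (Finset.mem_sdiff.mpr ⟨hfiT, hfiN⟩)
        set R : Polynomial ℝ := ∑ m ∈ TT S xp yp (n-1),
          Polynomial.C (gam S xp yp n m) * qm m with hR
        have hRd : R.natDegree < n := by
          have h1 : R.natDegree ≤ n - 1 := by
            refine le_trans (Polynomial.natDegree_sum_le _ _) ?_
            rw [Finset.fold_max_le]
            refine ⟨Nat.zero_le _, fun m hm => ?_⟩
            refine le_trans Polynomial.natDegree_mul_le ?_
            rw [Polynomial.natDegree_C, zero_add]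
            have := (hqm m hm).1
            omega
          omega
        have hmonic : (Polynomial.X + Polynomial.C (1:ℝ)).Monic := Polynomial.monic_X_add_C 1
        have hXn : ((Polynomial.X + Polynomial.C (1:ℝ)) ^ n).natDegree = n := by
          rw [hmonic.natDegree_pow, Polynomial.natDegree_X_add_C, mul_one]
        refine ⟨(gam S xp yp n (f i))⁻¹ • ((Polynomial.X + Polynomial.C (1:ℝ)) ^ n - R), ?_, ?_⟩
        · rw [Polynomial.smul_eq_C_mul, Polynomial.natDegree_C_mul (inv_ne_zero hc)]
          rw [Polynomial.natDegree_sub_eq_left_of_natDegree_lt (by rw [hXn]; exact hRd), hXn]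
        · rw [Polynomial.smul_eq_C_mul, _root_.map_mul, Polynomial.aeval_C, ← Algebra.smul_def]
          rw [map_sub, map_pow, map_add, Polynomial.aeval_X, Polynomial.aeval_C,
            _root_.map_one]
          have hRA : Polynomial.aeval (S.A 1) R
              = ∑ m ∈ TT S xp yp (n-1), gam S xp yp n m • S.A m := by
            rw [hR, map_sum]
            refine Finset.sum_congr rfl fun m hm => ?_
            rw [_root_.map_mul, Polynomial.aeval_C, ← Algebra.smul_def, (hqm m hm).2]
          rw [hRA, show (S.A 1 + 1 : Matrix V V ℝ) = 1 + S.A 1 from add_comm _ _,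
            B_repr S hpt1 hpt0 n,
            ← Finset.sum_sdiff (Finset.subset_univ (TT S xp yp (n-1))), add_sub_cancel_right]
          have hsingle : ∑ m ∈ Finset.univ \ TT S xp yp (n-1), gam S xp yp n m • S.A m
              = gam S xp yp n (f i) • S.A (f i) := by
            refine Finset.sum_eq_single (f i) ?_ ?_
            · intro m hm hmne
              rw [Finset.mem_sdiff] at hm
              have hg : gam S xp yp n m = 0 := by
                by_contra hg
                exact hmne (huniq m ((mem_TT S).mpr hg) hm.2)
              rw [hg, zero_smul]
            · intro hni
              exact absurd (Finset.mem_sdiff.mpr ⟨Finset.mem_univ _, hfiN⟩) hni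
          rw [hsingle, smul_smul, inv_mul_cancel₀ hc, one_smul]
  have hlast : ∀ i : Fin (d+1), ∃ q : Polynomial ℝ,
      q.natDegree = (i:ℕ) ∧ Polynomial.aeval (S.A 1) q = S.A (f i) :=
    fun i => POLY (i:ℕ) i rfl
  choose v hv1 hv2 using hlast
  refine ⟨Equiv.ofBijective f hbij, hf3 0 rfl, hf4 1 h01, hf5 (Fin.last d) (Fin.val_last d), v,
    fun i => ⟨hv1 i, hv2 i⟩⟩

end Thm11

/-- Theorem 1.1: a symmetric association scheme with pairwise distinct `θ_i` is
P-polynomial with respect to `A 1` iff there exists `l` with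
`∏_{j=1, j≠i}^d (θ₀ − θ_j)/(θ_i − θ_j) = − Q_i(l)` for all `i ∈ {1,…,d}`; moreover,
any such `l` is the last index in the P-polynomial ordering. -/
theorem stmt11 {V : Type*} [Fintype V] [DecidableEq V] {d : ℕ} (S : AssocScheme V d)
    (hd : 1 ≤ d) (hθ : Function.Injective S.theta) :
    (S.IsPPolyWrtA1 ↔
        ∃ l : Fin (d + 1), ∀ i : Fin (d + 1), i ≠ 0 →
          (∏ j ∈ (Finset.univ.erase 0).erase i,
            (S.theta 0 - S.theta j) / (S.theta i - S.theta j)) = - S.Q i l) ∧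
      ∀ l : Fin (d + 1),
        (∀ i : Fin (d + 1), i ≠ 0 →
          (∏ j ∈ (Finset.univ.erase 0).erase i,
            (S.theta 0 - S.theta j) / (S.theta i - S.theta j)) = - S.Q i l) →
        ∃ ξ : Equiv.Perm (Fin (d + 1)), ξ 0 = 0 ∧ ξ 1 = 1 ∧ ξ (Fin.last d) = l ∧
          ∃ v : Fin (d + 1) → Polynomial ℝ,
            ∀ i, (v i).natDegree = (i : ℕ) ∧ Polynomial.aeval (S.A 1) (v i) = S.A (ξ i) := by
  classical
  choose xp yp hpt1 hpt0 using Thm11.pt_spec S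
  constructor
  · constructor
    · rintro ⟨ξ, hξ0, hξ1, v, hv⟩
      exact ⟨ξ (Fin.last d), Thm11.forward S hpt1 hpt0 hθ hd ξ hξ0 v hv⟩
    · rintro ⟨l, hl⟩
      obtain ⟨ξ, h0, h1, hlast, v, hv⟩ := Thm11.construct S hpt1 hpt0 hθ hd hl
      exact ⟨ξ, h0, h1, v, hv⟩
  · intro l hl
    obtain ⟨ξ, h0, h1, hlast, v, hv⟩ := Thm11.construct S hpt1 hpt0 hθ hd hl
    exact ⟨ξ, h0, h1, hlast, v, hv⟩
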